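/- For every integer m ≥ 1 and nonnegative real weights β_1,…,β_m and α_0,…,α_m with Σ_{j=1}^m β_j + Σ_{i=0}^m α_i = 1, there exists a binary tree with m internal nodes whose search cost satisfies C ≤ H(α_0, β_1, α_1, …, β_m, α_m) + 1 + Σ_{i=0}^m α_i. -/
import Mathlib


/-- A (full) binary tree: every internal node has exactly two children. -/
inductive BTree where
  | leaf : BTree
  | node : BTree → BTree → BTree

namespace BTree

/-- Depths of the leaves, in left-to-right order. -/
def leafDepths : BTree → List ℕ
  | leaf => [0]
  | node l r => l.leafDepths.map (· + 1) ++ r.leafDepths.map (· + 1)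

/-- Depths of the internal nodes, in symmetric (in-)order. -/
def internalDepths : BTree → List ℕ
  | leaf => []
  | node l r => l.internalDepths.map (· + 1) ++ [0] ++ r.internalDepths.map (· + 1)

end BTree

namespace Mehlhorn2Aux

open Finset

lemma getD_map_succ (l : List ℕ) (k : ℕ) (h : k < l.length) :
    (l.map (· + 1)).getD k 0 = l.getD k 0 + 1 := by
  rw [List.getD_eq_getElem _ _ (by simpa using h), List.getD_eq_getElem _ _ h,
    List.getElem_map]

open Classical in
/-- the cut rule: the largest node index `k ∈ (lo, hi]` whose "preceding boundary
midpoint-sum" is at most `2*mid`; `lo+1` if there is none. -/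
noncomputable def cutIdx (G : ℕ → ℝ) (lo hi : ℕ) (mid : ℝ) : ℕ :=
  if h : ((Finset.Icc (lo+1) hi).filter (fun k => G (2*k-2) + G (2*k-1) ≤ 2*mid)).Nonempty
  then ((Finset.Icc (lo+1) hi).filter (fun k => G (2*k-2) + G (2*k-1) ≤ 2*mid)).max' h
  else lo + 1

lemma cutIdx_spec (G : ℕ → ℝ) (lo hi : ℕ) (mid : ℝ) (h : lo < hi) :
    lo < cutIdx G lo hi mid ∧ cutIdx G lo hi mid ≤ hi ∧
    (lo + 1 < cutIdx G lo hi mid →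
      G (2*(cutIdx G lo hi mid)-2) + G (2*(cutIdx G lo hi mid)-1) ≤ 2*mid) ∧
    (cutIdx G lo hi mid < hi →
      2*mid ≤ G (2*(cutIdx G lo hi mid)) + G (2*(cutIdx G lo hi mid)+1)) := by
  classical
  unfold cutIdx
  split_ifs with hS
  · set S := (Finset.Icc (lo+1) hi).filter (fun k => G (2*k-2) + G (2*k-1) ≤ 2*mid) with hSdef
    set j := S.max' hS with hjdef
    have hmem : j ∈ S := S.max'_mem hS
    rw [hSdef, Finset.mem_filter, Finset.mem_Icc] at hmem
    refine ⟨by omega, hmem.1.2, fun _ => hmem.2, fun hlt => ?_⟩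
    by_contra hcon
    push_neg at hcon
    have hmem2 : j + 1 ∈ S := by
      rw [hSdef, Finset.mem_filter, Finset.mem_Icc]
      refine ⟨⟨by omega, by omega⟩, ?_⟩
      have e1 : 2*(j+1)-2 = 2*j := by omega
      have e2 : 2*(j+1)-1 = 2*j+1 := by omega
      rw [e1, e2]
      linarith
    have := S.le_max' _ hmem2
    omega
  · refine ⟨by omega, by omega, fun hcon => by omega, fun hlt => ?_⟩
    rw [Finset.not_nonempty_iff_eq_empty, Finset.filter_eq_empty_iff] at hS
    have h2 : lo + 2 ∈ Finset.Icc (lo+1) hi := by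
      rw [Finset.mem_Icc]; omega
    have := hS h2
    simp only [not_le] at this
    have e1 : 2*(lo+2)-2 = 2*(lo+1) := by omega
    have e2 : 2*(lo+2)-1 = 2*(lo+1)+1 := by omega
    rw [e1, e2] at this
    linarith

/-- Mehlhorn's method-2 tree, built by repeated bisection. -/
noncomputable def build (G : ℕ → ℝ) : ℕ → ℕ → ℕ → ℝ → ℝ → BTree
  | 0, _, _, _, _ => .leaf
  | (fuel+1), lo, hi, u, v =>
    if hi ≤ lo then .leaf
    else BTree.node (build G fuel lo (cutIdx G lo hi ((u+v)/2) - 1) u ((u+v)/2))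
                    (build G fuel (cutIdx G lo hi ((u+v)/2)) hi ((u+v)/2) v)

lemma alpha_base (G : ℕ → ℝ) (lo : ℕ) (u v : ℝ)
    (hbase : (u - G (2*lo) ≤ G (2*lo+1) - u ∧ G (2*lo+1) ≤ 2*v - u) ∨
      (G (2*lo+1) - v ≤ v - G (2*lo) ∧ 2*u - v ≤ G (2*lo))) :
    G (2*lo+1) - G (2*lo) ≤ 4*(v-u) := by
  rcases hbase with ⟨h1, h2⟩ | ⟨h1, h2⟩ <;> linarith

/-- The main induction: the bisection tree satisfies the pointwise
Mehlhorn depth bounds. -/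
lemma main (G : ℕ → ℝ) (hG : Monotone G) :
    ∀ fuel lo hi u v, lo ≤ hi → hi - lo ≤ fuel → u < v →
    (lo < hi →
      (∀ k, lo < k → k ≤ hi → u ≤ G (2*k-1) ∧ G (2*k) ≤ v) ∧
      (u - G (2*lo) ≤ G (2*lo+1) - u) ∧
      (G (2*hi+1) - v ≤ v - G (2*hi))) →
    (lo = hi →
      ((u - G (2*lo) ≤ G (2*lo+1) - u ∧ G (2*lo+1) ≤ 2*v - u) ∨
       (G (2*lo+1) - v ≤ v - G (2*lo) ∧ 2*u - v ≤ G (2*lo)))) →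
    (build G fuel lo hi u v).internalDepths.length = hi - lo ∧
    (build G fuel lo hi u v).leafDepths.length = hi - lo + 1 ∧
    (∀ k, k < hi - lo →
      G (2*(lo+1+k)) - G (2*(lo+1+k)-1) ≤
        (v-u) * (1/2)^((build G fuel lo hi u v).internalDepths.getD k 0)) ∧
    (∀ i, i ≤ hi - lo →
      G (2*(lo+i)+1) - G (2*(lo+i)) ≤
        4*(v-u) * (1/2)^((build G fuel lo hi u v).leafDepths.getD i 0)) := by
  intro fuel
  induction fuel with
  | zero =>
    intro lo hi u v hle hfuel huv _ hbase
    have hlohi : lo = hi := by omega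
    subst hlohi
    simp only [build, BTree.internalDepths, BTree.leafDepths]
    refine ⟨by simp, by simp, fun k hk => by omega, fun i hi' => ?_⟩
    have : i = 0 := by omega
    subst this
    simpa using alpha_base G lo u v (hbase rfl)
  | succ fuel ih =>
    intro lo hi u v hle hfuel huv hnb hbase
    by_cases hbc : hi ≤ lo
    · have hlohi : lo = hi := by omega
      subst hlohi
      simp only [build, if_pos hbc, BTree.internalDepths, BTree.leafDepths]
      refine ⟨by simp, by simp, fun k hk => by omega, fun i hi' => ?_⟩
      have : i = 0 := by omega
      subst this
      simpa using alpha_base G lo u v (hbase rfl)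
    · push_neg at hbc
      obtain ⟨hI2, hI3, hI5⟩ := hnb hbc
      have humid : u < (u+v)/2 := by linarith
      have hmidv : (u+v)/2 < v := by linarith
      obtain ⟨hj1, hj2, hLc, hRc⟩ := cutIdx_spec G lo hi ((u+v)/2) hbc
      set mid := (u+v)/2 with hmiddef
      set j := cutIdx G lo hi mid with hjdef
      have hbuild : build G (fuel+1) lo hi u v =
          BTree.node (build G fuel lo (j-1) u mid) (build G fuel j hi mid v) := by
        simp only [build]
        rw [if_neg (by omega)]
      -- left child
      have IHL := ih lo (j-1) u mid (by omega) (by omega) humid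
        (by
          intro hlt2
          have hLc' := hLc (by omega)
          refine ⟨?_, hI3, ?_⟩
          · intro k hk1 hk2
            refine ⟨(hI2 k hk1 (by omega)).1, ?_⟩
            have m1 : G (2*k) ≤ G (2*j-2) := hG (by omega)
            have m2 : G (2*j-2) ≤ G (2*j-1) := hG (by omega)
            linarith
          · have e1 : 2*(j-1)+1 = 2*j-1 := by omega
            have e2 : 2*(j-1) = 2*j-2 := by omega
            rw [e1, e2]
            linarith)
        (by
          intro heq
          left
          refine ⟨hI3, ?_⟩
          have h1 : G (2*lo+1) ≤ G (2*(lo+1)) := hG (by omega)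
          have h2 : G (2*(lo+1)) ≤ v := (hI2 (lo+1) (by omega) (by omega)).2
          have h3 : 2*mid - u = v := by rw [hmiddef]; ring
          linarith)
      -- right child
      have IHR := ih j hi mid v (by omega) (by omega) hmidv
        (by
          intro hlt2
          have hRc' := hRc hlt2
          have hmono : G (2*j) ≤ G (2*j+1) := hG (by omega)
          have hmj : mid ≤ G (2*j+1) := by linarith
          refine ⟨?_, by linarith, hI5⟩
          intro k hk1 hk2
          refine ⟨?_, (hI2 k (by omega) hk2).2⟩
          have m1 : G (2*j+1) ≤ G (2*k-1) := hG (by omega)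
          linarith)
        (by
          intro heq
          right
          have h1 : u ≤ G (2*hi-1) := (hI2 hi hbc le_rfl).1
          have h2 : G (2*hi-1) ≤ G (2*hi) := hG (by omega)
          have h3 : 2*mid - v = u := by rw [hmiddef]; ring
          rw [heq]
          exact ⟨hI5, by linarith⟩)
      obtain ⟨L1, L2, L3, L4⟩ := IHL
      obtain ⟨R1, R2, R3, R4⟩ := IHR
      rw [hbuild]
      simp only [BTree.internalDepths, BTree.leafDepths]
      have hALen : ((build G fuel lo (j-1) u mid).internalDepths.map (· + 1)).length
          = j - 1 - lo := by simp [L1]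
      have hALen' : ((build G fuel lo (j-1) u mid).leafDepths.map (· + 1)).length
          = j - lo := by simp [L2]; omega
      have hBLen : ((build G fuel j hi mid v).internalDepths.map (· + 1)).length
          = hi - j := by simp [R1]
      have hBLen' : ((build G fuel j hi mid v).leafDepths.map (· + 1)).length
          = hi - j + 1 := by simp [R2]
      refine ⟨by simp [L1, R1]; omega, by simp [L2, R2]; omega, ?_, ?_⟩
      · -- internal nodes
        intro k hk
        have hmidu : mid - u = (v-u)/2 := by rw [hmiddef]; ring
        have hvmid : v - mid = (v-u)/2 := by rw [hmiddef]; ring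
        rcases lt_trichotomy k (j-1-lo) with hcase | hcase | hcase
        · -- in the left subtree
          have hk1 : k < ((build G fuel lo (j-1) u mid).internalDepths.map (· + 1) ++ [0]).length := by
            simp [hALen]; omega
          rw [List.getD_append _ _ _ _ (by simp at hk1 ⊢; omega),
            List.getD_append _ _ _ _ (by rw [hALen]; omega),
            getD_map_succ _ _ (by rw [L1]; omega)]
          have hb := L3 k (by omega)
          calc G (2*(lo+1+k)) - G (2*(lo+1+k)-1)
              ≤ (mid-u) * (1/2)^((build G fuel lo (j-1) u mid).internalDepths.getD k 0) := hb
            _ = (v-u) * (1/2)^((build G fuel lo (j-1) u mid).internalDepths.getD k 0 + 1) := by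
                rw [hmidu]; ring
        · -- the root
          have e : lo+1+k = j := by omega
          rw [e]
          have hk1 : k < ((build G fuel lo (j-1) u mid).internalDepths.map (· + 1) ++ [0]).length := by
            simp [hALen]; omega
          rw [List.getD_append _ _ _ _ (by simp at hk1 ⊢; omega),
            List.getD_append_right _ _ _ _ (by rw [hALen]; omega)]
          have e2 : k - ((build G fuel lo (j-1) u mid).internalDepths.map (· + 1)).length = 0 := by
            rw [hALen]; omega
          rw [e2]
          simp only [List.getD_cons_zero, pow_zero, mul_one]
          have h1 := (hI2 j (by omega) hj2).1
          have h2 := (hI2 j (by omega) hj2).2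
          linarith
        · -- in the right subtree
          have hklen : ((build G fuel lo (j-1) u mid).internalDepths.map (· + 1) ++ [0]).length ≤ k := by
            simp [hALen]; omega
          rw [List.getD_append_right _ _ _ _ hklen]
          have e2 : k - ((build G fuel lo (j-1) u mid).internalDepths.map (· + 1) ++ [0]).length
              = k - (j - lo) := by simp [hALen]; omega
          rw [e2]
          set k' := k - (j - lo) with hk'def
          have hk'lt : k' < hi - j := by omega
          rw [getD_map_succ _ _ (by rw [R1]; omega)]
          have hb := R3 k' (by omega)
          have e3 : j+1+k' = lo+1+k := by omega
          rw [e3] at hb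
          calc G (2*(lo+1+k)) - G (2*(lo+1+k)-1)
              ≤ (v-mid) * (1/2)^((build G fuel j hi mid v).internalDepths.getD k' 0) := hb
            _ = (v-u) * (1/2)^((build G fuel j hi mid v).internalDepths.getD k' 0 + 1) := by
                rw [hvmid]; ring
      · -- leaves
        intro i hile
        have hmidu : mid - u = (v-u)/2 := by rw [hmiddef]; ring
        have hvmid : v - mid = (v-u)/2 := by rw [hmiddef]; ring
        rcases lt_or_ge i (j-lo) with hcase | hcase
        · rw [List.getD_append _ _ _ _ (by rw [hALen']; omega),
            getD_map_succ _ _ (by rw [L2]; omega)]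
          have hb := L4 i (by omega)
          calc G (2*(lo+i)+1) - G (2*(lo+i))
              ≤ 4*(mid-u) * (1/2)^((build G fuel lo (j-1) u mid).leafDepths.getD i 0) := hb
            _ = 4*(v-u) * (1/2)^((build G fuel lo (j-1) u mid).leafDepths.getD i 0 + 1) := by
                rw [hmidu]; ring
        · rw [List.getD_append_right _ _ _ _ (by rw [hALen']; omega)]
          rw [hALen']
          set i' := i - (j - lo) with hi'def
          have hi'le : i' ≤ hi - j := by omega
          rw [getD_map_succ _ _ (by rw [R2]; omega)]
          have hb := R4 i' (by omega)
          have e3 : j+i' = lo+i := by omega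
          rw [e3] at hb
          calc G (2*(lo+i)+1) - G (2*(lo+i))
              ≤ 4*(v-mid) * (1/2)^((build G fuel j hi mid v).leafDepths.getD i' 0) := hb
            _ = 4*(v-u) * (1/2)^((build G fuel j hi mid v).leafDepths.getD i' 0 + 1) := by
                rw [hvmid]; ring

/-- The combined weight sequence: `α₀, β₁, α₁, β₂, α₂, …`. -/
noncomputable def cw (m : ℕ) (β : Fin m → ℝ) (α : Fin (m+1) → ℝ) : ℕ → ℝ := fun t =>
  if t % 2 = 0 then (if h : t/2 < m+1 then α ⟨t/2, h⟩ else 0)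
  else (if h : t/2 < m then β ⟨t/2, h⟩ else 0)

noncomputable def Gw (m : ℕ) (β : Fin m → ℝ) (α : Fin (m+1) → ℝ) : ℕ → ℝ := fun t =>
  ∑ s ∈ Finset.range t, cw m β α s

variable {m : ℕ} {β : Fin m → ℝ} {α : Fin (m+1) → ℝ}

lemma cw_nonneg (hβ : ∀ j, 0 ≤ β j) (hα : ∀ i, 0 ≤ α i) (t : ℕ) : 0 ≤ cw m β α t := by
  unfold cw
  split_ifs <;> first | exact hα _ | exact hβ _ | exact le_refl 0

lemma Gw_mono (hβ : ∀ j, 0 ≤ β j) (hα : ∀ i, 0 ≤ α i) : Monotone (Gw m β α) := by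
  intro s t hst
  exact Finset.sum_le_sum_of_subset_of_nonneg (Finset.range_subset_range.2 hst)
    (fun i _ _ => cw_nonneg hβ hα i)

lemma cw_even (i : ℕ) (h : i < m + 1) : cw m β α (2*i) = α ⟨i, h⟩ := by
  unfold cw
  rw [if_pos (by omega : (2*i) % 2 = 0)]
  rw [show (2*i)/2 = i from by omega]
  rw [dif_pos h]

lemma cw_odd (i : ℕ) (h : i < m) : cw m β α (2*i+1) = β ⟨i, h⟩ := by
  unfold cw
  rw [if_neg (by omega : ¬ (2*i+1) % 2 = 0)]
  rw [show (2*i+1)/2 = i from by omega]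
  rw [dif_pos h]

lemma Gw_split (n : ℕ) :
    Gw m β α (2*n+1) = (∑ i ∈ Finset.range (n+1), cw m β α (2*i))
      + (∑ i ∈ Finset.range n, cw m β α (2*i+1)) := by
  induction n with
  | zero => simp [Gw]
  | succ n ihn =>
    have e : 2*(n+1)+1 = (2*n+1) + 1 + 1 := by omega
    rw [e]
    unfold Gw
    rw [Finset.sum_range_succ, Finset.sum_range_succ]
    unfold Gw at ihn
    rw [ihn, Finset.sum_range_succ (fun i => cw m β α (2*i)) (n+1),
      Finset.sum_range_succ (fun i => cw m β α (2*i+1)) n]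
    have e1 : 2*(n+1) = 2*n+1+1 := by omega
    rw [e1]
    ring

lemma Gw_total : Gw m β α (2*m+1) = (∑ j, β j) + (∑ i, α i) := by
  rw [Gw_split m]
  have he : ∑ i ∈ Finset.range (m+1), cw m β α (2*i) = ∑ i, α i := by
    rw [← Fin.sum_univ_eq_sum_range (fun i => cw m β α (2*i)) (m+1)]
    exact Finset.sum_congr rfl (fun i _ => by rw [cw_even i.val i.isLt])
  have ho : ∑ i ∈ Finset.range m, cw m β α (2*i+1) = ∑ j, β j := by
    rw [← Fin.sum_univ_eq_sum_range (fun i => cw m β α (2*i+1)) m]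
    exact Finset.sum_congr rfl (fun i _ => by rw [cw_odd i.val i.isLt])
  rw [he, ho]
  ring

lemma node_term (x : ℝ) (hx : 0 ≤ x) (d : ℕ) (hb : x ≤ (1/2)^d) :
    x * ((d:ℝ) + 1) ≤ x * Real.logb 2 x⁻¹ + x := by
  rcases hx.eq_or_lt with h | h
  · simp [← h]
  · have h2 : (2:ℝ)^d ≤ x⁻¹ := by
      have h3 := inv_anti₀ h hb
      have h4 : ((1/2:ℝ)^d)⁻¹ = 2^d := by
        rw [one_div, inv_pow, inv_inv]
      rwa [h4] at h3
    have h5 : Real.logb 2 ((2:ℝ)^d) ≤ Real.logb 2 x⁻¹ :=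
      Real.logb_le_logb_of_le one_lt_two (by positivity) h2
    rw [Real.logb_pow, Real.logb_self_eq_one one_lt_two, mul_one] at h5
    nlinarith

lemma leaf_term (x : ℝ) (hx : 0 ≤ x) (d : ℕ) (hb : x ≤ 4*(1/2)^d) :
    x * (d:ℝ) ≤ x * Real.logb 2 x⁻¹ + 2*x := by
  rcases hx.eq_or_lt with h | h
  · simp [← h]
  · have h2 : ((4:ℝ)*(1/2)^d)⁻¹ ≤ x⁻¹ := inv_anti₀ h hb
    have h4 : ((4:ℝ)*(1/2)^d)⁻¹ = 2^d / 4 := by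
      rw [mul_inv, one_div, inv_pow, inv_inv]
      ring
    rw [h4] at h2
    have h5 : Real.logb 2 ((2:ℝ)^d / 4) ≤ Real.logb 2 x⁻¹ :=
      Real.logb_le_logb_of_le one_lt_two (by positivity) h2
    have h6 : Real.logb 2 ((2:ℝ)^d / 4) = (d:ℝ) - 2 := by
      rw [Real.logb_div (by positivity) (by norm_num),
        Real.logb_pow, Real.logb_self_eq_one one_lt_two, mul_one,
        show (4:ℝ) = 2^(2:ℕ) from by norm_num,
        Real.logb_pow, Real.logb_self_eq_one one_lt_two]
      push_cast
      ring
    rw [h6] at h5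
    nlinarith

end Mehlhorn2Aux

/-- Mehlhorn's Method 2 (bisection heuristic) guarantee: for weights
`β₁,…,β_m` (internal nodes, symmetric order) and `α₀,…,α_m` (leaves,
left-to-right) summing to 1, there is a binary search tree with search cost
at most `H + 1 + Σ αᵢ`. -/
theorem nearly_optimal_bst_method2
    (m : ℕ) (hm : 1 ≤ m)
    (β : Fin m → ℝ) (α : Fin (m + 1) → ℝ)
    (hβ : ∀ j, 0 ≤ β j) (hα : ∀ i, 0 ≤ α i)
    (hsum : (∑ j, β j) + (∑ i, α i) = 1) :
    ∃ T : BTree,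
      T.internalDepths.length = m ∧ T.leafDepths.length = m + 1 ∧
      (∑ j : Fin m, β j * ((T.internalDepths.getD j 0 : ℝ) + 1))
        + (∑ i : Fin (m + 1), α i * (T.leafDepths.getD i 0 : ℝ))
      ≤ ((∑ j, β j * Real.logb 2 (β j)⁻¹) + (∑ i, α i * Real.logb 2 (α i)⁻¹))
          + 1 + (∑ i, α i) := by
  classical
  open Mehlhorn2Aux in
  set G := Gw m β α with hGdef
  have hGmono : Monotone G := Gw_mono hβ hα
  have hG0 : G 0 = 0 := by simp [hGdef, Gw]
  have hG1 : G (2*m+1) = 1 := by rw [hGdef, Gw_total, hsum]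
  have hGnn : ∀ t, 0 ≤ G t := fun t => hG0 ▸ hGmono (Nat.zero_le t)
  have hGle1 : ∀ t, t ≤ 2*m+1 → G t ≤ 1 := fun t ht => hG1 ▸ hGmono ht
  obtain ⟨C1, C2, C3, C4⟩ := main G hGmono m 0 m 0 1 (by omega) (by omega) one_pos
    (fun _ => ⟨fun k hk1 hk2 => ⟨hGnn _, hGle1 _ (by omega)⟩,
      by simpa [hG0] using hGnn 1,
      by rw [show 2*m+1 = 2*m+1 from rfl, hG1]; simpa using hGle1 (2*m) (by omega)⟩)
    (fun h => absurd h (by omega))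
  refine ⟨build G m 0 m 0 1, by simpa using C1, by simpa using C2, ?_⟩
  set T := build G m 0 m 0 1 with hTdef
  -- pointwise bounds
  have hstep : ∀ t, G (t+1) - G t = cw m β α t := by
    intro t
    rw [hGdef]
    unfold Gw
    rw [Finset.sum_range_succ]
    ring
  have hnode : ∀ j : Fin m, β j ≤ (1/2:ℝ)^(T.internalDepths.getD j 0) := by
    intro j
    have hb := C3 j.val (by omega)
    have e1 : 2*(0+1+(j:ℕ)) = (2*(j:ℕ)+1)+1 := by omega
    have e2 : 2*(0+1+(j:ℕ))-1 = 2*(j:ℕ)+1 := by omega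
    rw [e2, e1, hstep, cw_odd (j:ℕ) j.isLt, Fin.eta] at hb
    simpa using hb
  have hleaf : ∀ i : Fin (m+1), α i ≤ 4*(1/2:ℝ)^(T.leafDepths.getD i 0) := by
    intro i
    have hb := C4 i.val (by omega)
    have e1 : 2*(0+(i:ℕ))+1 = (2*(i:ℕ))+1 := by omega
    have e2 : 2*(0+(i:ℕ)) = 2*(i:ℕ) := by omega
    rw [e1, e2, hstep, cw_even (i:ℕ) i.isLt, Fin.eta] at hb
    have e3 : 4*((1:ℝ)-0) = 4 := by norm_num
    calc α i ≤ 4*((1:ℝ)-0) * (1/2)^(T.leafDepths.getD i 0) := hb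
      _ = 4*(1/2:ℝ)^(T.leafDepths.getD i 0) := by rw [e3]
  have hN : (∑ j : Fin m, β j * ((T.internalDepths.getD j 0 : ℝ) + 1))
      ≤ (∑ j, β j * Real.logb 2 (β j)⁻¹) + (∑ j, β j) := by
    rw [← Finset.sum_add_distrib]
    exact Finset.sum_le_sum (fun j _ => node_term (β j) (hβ j) _ (hnode j))
  have hL : (∑ i : Fin (m+1), α i * (T.leafDepths.getD i 0 : ℝ))
      ≤ (∑ i, α i * Real.logb 2 (α i)⁻¹) + 2*(∑ i, α i) := by
    have : (∑ i, α i * Real.logb 2 (α i)⁻¹) + 2*(∑ i, α i)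
        = ∑ i : Fin (m+1), (α i * Real.logb 2 (α i)⁻¹ + 2 * α i) := by
      rw [Finset.sum_add_distrib, Finset.mul_sum]
    rw [this]
    exact Finset.sum_le_sum (fun i _ => leaf_term (α i) (hα i) _ (hleaf i))
  linarith
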